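/- arXiv:1901.01761 — 7 statements merged into one kernel-verified Lean document; each statement's English description precedes it below -/
import Mathlib

section
/- Let X be a finite type, p : X → ℝ → ℝ a parametric family of probability mass functions on X, and f : X → ℝ. Then for every θ, the map θ ↦ ∑_{x ∈ X} p x θ · f x is differentiable and its derivative at θ equals ∑_{x ∈ X} p x θ · (deriv of t ↦ log (p x t) at θ) · f x (the likelihood ratio / REINFORCE estimator identity). -/
/-- The likelihood ratio / REINFORCE estimator identity: for a parametric family of
probability mass functions `p` on a finite type `X` and a loss `f : X → ℝ`, the map
`θ ↦ ∑ x, p x θ * f x` is differentiable with derivative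
`∑ x, p x θ * (score of x at θ) * f x`. -/
theorem likelihood_ratio_estimator {X : Type*} [Fintype X]
    (p : X → ℝ → ℝ)
    (hpos : ∀ x θ, 0 < p x θ)
    (hdiff : ∀ x, Differentiable ℝ (p x))
    (hsum : ∀ θ : ℝ, ∑ x, p x θ = 1)
    (f : X → ℝ) :
    ∀ θ : ℝ, HasDerivAt (fun θ => ∑ x, p x θ * f x)
      (∑ x, p x θ * deriv (fun t => Real.log (p x t)) θ * f x) θ := by
  intro θ
  have key : ∀ x, p x θ * deriv (fun t => Real.log (p x t)) θ = deriv (p x) θ := by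
    intro x
    have h : HasDerivAt (fun t => Real.log (p x t)) (deriv (p x) θ / p x θ) θ :=
      ((hdiff x θ).hasDerivAt).log (hpos x θ).ne'
    rw [h.deriv]
    rw [mul_comm]; exact div_mul_cancel₀ _ (hpos x θ).ne'
  have : (∑ x, p x θ * deriv (fun t => Real.log (p x t)) θ * f x)
      = ∑ x, deriv (p x) θ * f x := by
    refine Finset.sum_congr rfl fun x _ => ?_
    rw [key x]
  rw [this]
  exact HasDerivAt.fun_sum fun x _ => ((hdiff x θ).hasDerivAt).mul_const (f x)
end

section
/- Let X be a finite type, p : X → ℝ → ℝ a parametric family of probability mass functions on X, and f : X → ℝ → ℝ with θ ↦ f x θ differentiable for each x. Then for every θ, the derivative at θ of θ ↦ ∑_{x ∈ X} p x θ · f x θ equals ∑_{x ∈ X} p x θ · ( (deriv of t ↦ log (p x t) at θ) · f x θ + (deriv of t ↦ f x t at θ) ), i.e., the score-function estimator remains valid when the loss itself depends on the parameter. -/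
/-- The score-function estimator remains valid when the loss depends on the parameter:
the derivative at `θ` of `θ ↦ ∑ x, p x θ * f x θ` equals
`∑ x, p x θ * (score x θ * f x θ + deriv (f x) θ)`. -/
theorem score_function_estimator_param_dependent_loss {X : Type*} [Fintype X]
    (p : X → ℝ → ℝ)
    (hpos : ∀ x θ, 0 < p x θ)
    (hdiff : ∀ x, Differentiable ℝ (p x))
    (hsum : ∀ θ : ℝ, ∑ x, p x θ = 1)
    (f : X → ℝ → ℝ)
    (hf : ∀ x, Differentiable ℝ (f x)) :
    ∀ θ : ℝ, deriv (fun θ => ∑ x, p x θ * f x θ) θ =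
      ∑ x, p x θ * (deriv (fun t => Real.log (p x t)) θ * f x θ
        + deriv (fun t => f x t) θ) := by
  intro θ
  have hlog : ∀ x, deriv (fun t => Real.log (p x t)) θ = deriv (p x) θ / p x θ := by
    intro x
    exact deriv.log (hdiff x θ) (hpos x θ).ne'
  rw [deriv_fun_sum (A := fun x t => p x t * f x t) (fun x _ => ((hdiff x θ).mul (hf x θ)))]
  apply Finset.sum_congr rfl
  intro x _
  rw [deriv_fun_mul (hdiff x θ) (hf x θ), hlog]
  have hne : p x θ ≠ 0 := (hpos x θ).ne'
  field_simp
end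

section
/- Let A and S be finite types. Let π : A → ℝ → ℝ be a parametric family of probability mass functions on A, P : S → A → ℝ a transition kernel (P s a ≥ 0 and ∑_{s} P s a = 1 for each a), and ℓ₁ : A → ℝ, ℓ₂ : S → ℝ cost functions. Define the expected cost J(θ) = ∑_{a} π a θ · (ℓ₁ a + ∑_{s} P s a · ℓ₂ s) and the critic Q(a) = ℓ₁ a + ∑_{s} P s a · ℓ₂ s. Then for every θ and every baseline constant b ∈ ℝ, J is differentiable at θ and deriv J θ = ∑_{a} π a θ · (deriv of t ↦ log (π a t) at θ) · (Q a − b). -/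
/-- The policy gradient theorem with critic and baseline in a one-step MDP:
with expected cost `J θ = ∑ a, π a θ * (ℓ₁ a + ∑ s, P s a * ℓ₂ s)` and critic
`Q a = ℓ₁ a + ∑ s, P s a * ℓ₂ s`, for every `θ` and baseline constant `b`, `J` is
differentiable at `θ` with derivative `∑ a, π a θ * score a θ * (Q a − b)`. -/
theorem policy_gradient_critic_baseline {A S : Type*} [Fintype A] [Fintype S]
    (π : A → ℝ → ℝ)
    (hpos : ∀ a θ, 0 < π a θ)
    (hdiff : ∀ a, Differentiable ℝ (π a))
    (hsum : ∀ θ : ℝ, ∑ a, π a θ = 1)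
    (P : S → A → ℝ)
    (hPnonneg : ∀ s a, 0 ≤ P s a)
    (hPsum : ∀ a, ∑ s, P s a = 1)
    (ℓ₁ : A → ℝ) (ℓ₂ : S → ℝ) :
    ∀ (θ b : ℝ),
      HasDerivAt (fun θ => ∑ a, π a θ * (ℓ₁ a + ∑ s, P s a * ℓ₂ s))
        (∑ a, π a θ * deriv (fun t => Real.log (π a t)) θ *
          ((ℓ₁ a + ∑ s, P s a * ℓ₂ s) - b)) θ := by
  intro θ b
  set Q : A → ℝ := fun a => ℓ₁ a + ∑ s, P s a * ℓ₂ s with hQ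
  -- derivative of the sum of π a equals 0
  have hsum0 : ∑ a, deriv (π a) θ = 0 := by
    have h1 : HasDerivAt (fun θ => ∑ a, π a θ) (∑ a, deriv (π a) θ) θ :=
      HasDerivAt.fun_sum fun a _ => ((hdiff a) θ).hasDerivAt
    have h2 : HasDerivAt (fun θ : ℝ => ∑ a, π a θ) 0 θ := by
      have : (fun θ : ℝ => ∑ a, π a θ) = fun _ => (1 : ℝ) := funext hsum
      rw [this]; exact hasDerivAt_const θ 1
    exact h1.unique h2
  have hscore : ∀ a, π a θ * deriv (fun t => Real.log (π a t)) θ = deriv (π a) θ := by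
    intro a
    have h : HasDerivAt (fun t => Real.log (π a t)) (deriv (π a) θ / π a θ) θ :=
      (((hdiff a) θ).hasDerivAt).log (hpos a θ).ne'
    rw [h.deriv]
    rw [mul_comm]; exact div_mul_cancel₀ _ (hpos a θ).ne'
  have hkey : (∑ a, π a θ * deriv (fun t => Real.log (π a t)) θ * (Q a - b))
      = ∑ a, deriv (π a) θ * Q a := by
    have : ∀ a, π a θ * deriv (fun t => Real.log (π a t)) θ * (Q a - b)
        = deriv (π a) θ * Q a - b * deriv (π a) θ := by
      intro a; rw [hscore a]; ring
    rw [Finset.sum_congr rfl fun a _ => this a, Finset.sum_sub_distrib,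
      ← Finset.mul_sum, hsum0, mul_zero, sub_zero]
  rw [hkey]
  exact HasDerivAt.fun_sum fun a _ => (((hdiff a) θ).hasDerivAt).mul_const (Q a)
end

section
/- Let (Ω, ℱ, ℙ) be a probability space, ℬ ≤ ℱ a sub-σ-algebra, and s, Q : Ω → ℝ random variables with s²·Q², s²·Q and s² integrable and with E[s²|ℬ] > 0 almost surely. Define the optimal baseline B* = E[s²·Q|ℬ] / E[s²|ℬ]. Then for every ℬ-measurable B : Ω → ℝ such that s²·(Q − B)² is integrable, E[s²·(Q − B*)²] ≤ E[s²·(Q − B)²]. -/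
open MeasureTheory


lemma baseline_aux {Ω : Type*} {mΩ : MeasurableSpace Ω}
    (μ : Measure Ω) [IsProbabilityMeasure μ]
    (ℬ : MeasurableSpace Ω) (hℬ : ℬ ≤ mΩ)
    (s Q : Ω → ℝ)
    (h1 : Integrable (fun ω => s ω ^ 2 * Q ω ^ 2) μ)
    (h2 : Integrable (fun ω => s ω ^ 2 * Q ω) μ)
    (h3 : Integrable (fun ω => s ω ^ 2) μ)
    (B : Ω → ℝ) (hB : StronglyMeasurable[ℬ] B)
    (hiB : Integrable (fun ω => s ω ^ 2 * (Q ω - B ω) ^ 2) μ) :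
    Integrable (fun ω => B ω ^ 2 * (μ[fun ω => s ω ^ 2|ℬ]) ω
      - 2 * (B ω * (μ[fun ω => s ω ^ 2 * Q ω|ℬ]) ω)) μ ∧
    ∫ ω, s ω ^ 2 * (Q ω - B ω) ^ 2 ∂μ
      = ∫ ω, (μ[fun ω => s ω ^ 2 * Q ω ^ 2|ℬ]) ω ∂μ
        + ∫ ω, (B ω ^ 2 * (μ[fun ω => s ω ^ 2|ℬ]) ω
            - 2 * (B ω * (μ[fun ω => s ω ^ 2 * Q ω|ℬ]) ω)) ∂μ := by
  have hBm : AEStronglyMeasurable[mΩ] B μ := (hB.mono hℬ).aestronglyMeasurable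
  -- integrability of s² B²  (as B² * s²)
  have hsB2 : Integrable (fun ω => B ω ^ 2 * s ω ^ 2) μ := by
    refine Integrable.mono' ((h1.const_mul 2).add (hiB.const_mul 2))
      (((hBm.pow 2)).mul h3.aestronglyMeasurable) ?_
    filter_upwards with ω
    rw [Real.norm_eq_abs, abs_of_nonneg (by positivity)]
    simp only [Pi.add_apply]
    nlinarith [mul_nonneg (sq_nonneg (s ω)) (sq_nonneg (2 * Q ω - B ω))]
  -- integrability of B · s² Q
  have hsQB : Integrable (fun ω => B ω * (s ω ^ 2 * Q ω)) μ := by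
    refine Integrable.mono' (h1.add hsB2) (hBm.mul h2.aestronglyMeasurable) ?_
    filter_upwards with ω
    rw [Real.norm_eq_abs]
    simp only [Pi.add_apply]
    rw [abs_le]
    constructor
    · nlinarith [sq_nonneg (s ω * (Q ω + B ω))]
    · nlinarith [sq_nonneg (s ω * (Q ω - B ω))]
  have e1 : μ[fun ω => B ω * (s ω ^ 2 * Q ω)|ℬ]
      =ᵐ[μ] fun ω => B ω * (μ[fun ω => s ω ^ 2 * Q ω|ℬ]) ω :=
    condExp_mul_of_stronglyMeasurable_left hB hsQB h2
  have e2 : μ[fun ω => B ω ^ 2 * s ω ^ 2|ℬ]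
      =ᵐ[μ] fun ω => B ω ^ 2 * (μ[fun ω => s ω ^ 2|ℬ]) ω :=
    condExp_mul_of_stronglyMeasurable_left (hB.pow 2) hsB2 h3
  have iBH : Integrable (fun ω => B ω * (μ[fun ω => s ω ^ 2 * Q ω|ℬ]) ω) μ :=
    integrable_condExp.congr e1
  have iBG : Integrable (fun ω => B ω ^ 2 * (μ[fun ω => s ω ^ 2|ℬ]) ω) μ :=
    integrable_condExp.congr e2
  refine ⟨iBG.sub (iBH.const_mul 2), ?_⟩
  have expand : ∫ ω, s ω ^ 2 * (Q ω - B ω) ^ 2 ∂μ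
      = ∫ ω, (s ω ^ 2 * Q ω ^ 2 + (B ω ^ 2 * s ω ^ 2
          - 2 * (B ω * (s ω ^ 2 * Q ω)))) ∂μ := by
    refine integral_congr_ae ?_
    filter_upwards with ω
    ring
  have hdiff : Integrable (fun ω => B ω ^ 2 * s ω ^ 2
      - 2 * (B ω * (s ω ^ 2 * Q ω))) μ := hsB2.sub (hsQB.const_mul 2)
  have hc2 : Integrable (fun ω => 2 * (B ω * (s ω ^ 2 * Q ω))) μ := hsQB.const_mul 2
  have hc2' : Integrable (fun ω => 2 * (B ω * (μ[fun ω => s ω ^ 2 * Q ω|ℬ]) ω)) μ :=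
    iBH.const_mul 2
  rw [expand, integral_add h1 hdiff, integral_sub hsB2 hc2,
    integral_sub iBG hc2']
  have c1 : ∫ ω, s ω ^ 2 * Q ω ^ 2 ∂μ
      = ∫ ω, (μ[fun ω => s ω ^ 2 * Q ω ^ 2|ℬ]) ω ∂μ := (integral_condExp hℬ).symm
  have c2 : ∫ ω, B ω * (s ω ^ 2 * Q ω) ∂μ
      = ∫ ω, B ω * (μ[fun ω => s ω ^ 2 * Q ω|ℬ]) ω ∂μ := by
    rw [← integral_condExp hℬ (f := fun ω => B ω * (s ω ^ 2 * Q ω))]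
    exact integral_congr_ae e1
  have c3 : ∫ ω, B ω ^ 2 * s ω ^ 2 ∂μ
      = ∫ ω, B ω ^ 2 * (μ[fun ω => s ω ^ 2|ℬ]) ω ∂μ := by
    rw [← integral_condExp hℬ (f := fun ω => B ω ^ 2 * s ω ^ 2)]
    exact integral_congr_ae e2
  rw [c1, integral_const_mul, integral_const_mul, c2, c3]

set_option maxHeartbeats 1000000

/-- The optimal baseline over a conditioning σ-algebra `ℬ`:
`B* = E[s²·Q|ℬ] / E[s²|ℬ]` minimizes `E[s²·(Q − B)²]` over all `ℬ`-measurable `B`. -/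
theorem optimal_baseline {Ω : Type*} {mΩ : MeasurableSpace Ω}
    (μ : Measure Ω) [IsProbabilityMeasure μ]
    (ℬ : MeasurableSpace Ω) (hℬ : ℬ ≤ mΩ)
    (s Q : Ω → ℝ)
    (h1 : Integrable (fun ω => s ω ^ 2 * Q ω ^ 2) μ)
    (h2 : Integrable (fun ω => s ω ^ 2 * Q ω) μ)
    (h3 : Integrable (fun ω => s ω ^ 2) μ)
    (hpos : ∀ᵐ ω ∂μ, 0 < (μ[fun ω => s ω ^ 2|ℬ]) ω) :
    ∀ B : Ω → ℝ, StronglyMeasurable[ℬ] B →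
      Integrable (fun ω => s ω ^ 2 * (Q ω - B ω) ^ 2) μ →
      ∫ ω, s ω ^ 2 *
          (Q ω - (μ[fun ω => s ω ^ 2 * Q ω|ℬ]) ω / (μ[fun ω => s ω ^ 2|ℬ]) ω) ^ 2 ∂μ
        ≤ ∫ ω, s ω ^ 2 * (Q ω - B ω) ^ 2 ∂μ := by
  intro B hB hiB
  set G : Ω → ℝ := μ[fun ω => s ω ^ 2|ℬ] with hGdef
  set H : Ω → ℝ := μ[fun ω => s ω ^ 2 * Q ω|ℬ] with hHdef
  set Bstar : Ω → ℝ := fun ω => H ω / G ω with hBstardef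
  set Bn : ℕ → Ω → ℝ := fun n ω => if |Bstar ω| ≤ (n : ℝ) then Bstar ω else B ω
    with hBndef
  -- measurability
  have hGm : Measurable[ℬ] G := stronglyMeasurable_condExp.measurable
  have hHm : Measurable[ℬ] H := stronglyMeasurable_condExp.measurable
  have hBstarm : Measurable[ℬ] Bstar := hHm.div hGm
  have hBn_sm : ∀ n, StronglyMeasurable[ℬ] (Bn n) := by
    intro n
    refine Measurable.stronglyMeasurable ?_
    exact Measurable.ite (measurableSet_le hBstarm.abs measurable_const)
      hBstarm hB.measurable
  have hBnm : ∀ n, AEStronglyMeasurable[mΩ] (Bn n) μ :=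
    fun n => ((hBn_sm n).mono hℬ).aestronglyMeasurable
  -- integrability of the truncated losses
  have hfn_int : ∀ n, Integrable (fun ω => s ω ^ 2 * (Q ω - Bn n ω) ^ 2) μ := by
    intro n
    have haesm : AEStronglyMeasurable[mΩ] (fun ω => s ω ^ 2 * (Q ω - Bn n ω) ^ 2) μ := by
      have hrw : (fun ω => s ω ^ 2 * (Q ω - Bn n ω) ^ 2)
          = fun ω => s ω ^ 2 * Q ω ^ 2 - 2 * (Bn n ω * (s ω ^ 2 * Q ω))
            + Bn n ω ^ 2 * s ω ^ 2 := by
        funext ω; ring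
      rw [hrw]
      exact (h1.aestronglyMeasurable.sub
          (((hBnm n).mul h2.aestronglyMeasurable).const_mul 2)).add
        (((hBnm n).pow 2).mul h3.aestronglyMeasurable)
    refine Integrable.mono'
      (((h1.const_mul 2).add (h3.const_mul (2 * (n : ℝ) ^ 2))).add hiB) haesm ?_
    filter_upwards with ω
    rw [Real.norm_eq_abs, abs_of_nonneg (by positivity)]
    simp only [Pi.add_apply]
    by_cases hcase : |Bstar ω| ≤ (n : ℝ)
    · simp only [hBndef, if_pos hcase]
      have hb2 : Bstar ω ^ 2 ≤ (n : ℝ) ^ 2 := by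
        have := abs_nonneg (Bstar ω)
        nlinarith [sq_abs (Bstar ω)]
      nlinarith [mul_nonneg (sq_nonneg (s ω)) (sq_nonneg (Q ω + Bstar ω)),
        mul_le_mul_of_nonneg_left hb2 (sq_nonneg (s ω)),
        mul_nonneg (sq_nonneg (s ω)) (sq_nonneg (Q ω - B ω))]
    · simp only [hBndef, if_neg hcase]
      nlinarith [mul_nonneg (sq_nonneg (s ω)) (sq_nonneg (Q ω)),
        mul_nonneg (sq_nonneg ((n : ℝ))) (sq_nonneg (s ω))]
  -- the key comparison at each truncation level
  obtain ⟨hφB, idB⟩ := baseline_aux μ ℬ hℬ s Q h1 h2 h3 B hB hiB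
  rw [← hGdef, ← hHdef] at hφB idB
  have key : ∀ n, ∫ ω, s ω ^ 2 * (Q ω - Bn n ω) ^ 2 ∂μ
      ≤ ∫ ω, s ω ^ 2 * (Q ω - B ω) ^ 2 ∂μ := by
    intro n
    obtain ⟨hφn, idn⟩ :=
      baseline_aux μ ℬ hℬ s Q h1 h2 h3 (Bn n) (hBn_sm n) (hfn_int n)
    rw [← hGdef, ← hHdef] at hφn idn
    rw [idn, idB]
    refine add_le_add_right (integral_mono_ae hφn hφB ?_) _
    filter_upwards [hpos] with ω hg
    by_cases hcase : |Bstar ω| ≤ (n : ℝ)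
    · simp only [hBndef, if_pos hcase]
      have hkey : B ω ^ 2 * G ω - 2 * (B ω * H ω)
          - (Bstar ω ^ 2 * G ω - 2 * (Bstar ω * H ω))
          = (B ω * G ω - H ω) ^ 2 / G ω := by
        simp only [hBstardef]
        field_simp
        ring
      have hnn : 0 ≤ (B ω * G ω - H ω) ^ 2 / G ω :=
        div_nonneg (sq_nonneg _) hg.le
      linarith
    · simp only [hBndef, if_neg hcase, le_refl]
  -- pointwise convergence of truncations
  have hself : ∀ ω, Filter.Tendsto (fun n => ENNReal.ofReal (s ω ^ 2 * (Q ω - Bn n ω) ^ 2))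
      Filter.atTop (nhds (ENNReal.ofReal (s ω ^ 2 * (Q ω - Bstar ω) ^ 2))) := by
    intro ω
    refine Filter.Tendsto.congr' ?_ tendsto_const_nhds
    filter_upwards [Filter.eventually_ge_atTop ⌈|Bstar ω|⌉₊] with n hn
    have hle : |Bstar ω| ≤ (n : ℝ) :=
      le_trans (Nat.le_ceil _) (by exact_mod_cast hn)
    simp only [hBndef, if_pos hle]
  -- Fatou
  have fatou : ∫⁻ ω, ENNReal.ofReal (s ω ^ 2 * (Q ω - Bstar ω) ^ 2) ∂μ
      ≤ Filter.atTop.liminf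
        (fun n => ∫⁻ ω, ENNReal.ofReal (s ω ^ 2 * (Q ω - Bn n ω) ^ 2) ∂μ) := by
    have hmeas : ∀ n, AEMeasurable
        (fun ω => ENNReal.ofReal (s ω ^ 2 * (Q ω - Bn n ω) ^ 2)) μ :=
      fun n => ENNReal.measurable_ofReal.comp_aemeasurable
        (hfn_int n).aestronglyMeasurable.aemeasurable
    have h := lintegral_liminf_le' (u := Filter.atTop) hmeas
    refine le_trans (le_of_eq (lintegral_congr fun ω => ?_)) h
    exact ((hself ω).liminf_eq).symm
  have hbound : Filter.atTop.liminf
        (fun n => ∫⁻ ω, ENNReal.ofReal (s ω ^ 2 * (Q ω - Bn n ω) ^ 2) ∂μ)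
      ≤ ENNReal.ofReal (∫ ω, s ω ^ 2 * (Q ω - B ω) ^ 2 ∂μ) := by
    have heq : ∀ n, ∫⁻ ω, ENNReal.ofReal (s ω ^ 2 * (Q ω - Bn n ω) ^ 2) ∂μ
        = ENNReal.ofReal (∫ ω, s ω ^ 2 * (Q ω - Bn n ω) ^ 2 ∂μ) :=
      fun n => (ofReal_integral_eq_lintegral_ofReal (hfn_int n)
        (Filter.Eventually.of_forall fun ω => by positivity)).symm
    calc Filter.atTop.liminf
          (fun n => ∫⁻ ω, ENNReal.ofReal (s ω ^ 2 * (Q ω - Bn n ω) ^ 2) ∂μ)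
        ≤ Filter.atTop.liminf
          (fun _ : ℕ => ENNReal.ofReal (∫ ω, s ω ^ 2 * (Q ω - B ω) ^ 2 ∂μ)) := by
          refine Filter.liminf_le_liminf ?_
          filter_upwards with n
          rw [heq n]
          exact ENNReal.ofReal_le_ofReal (key n)
      _ = ENNReal.ofReal (∫ ω, s ω ^ 2 * (Q ω - B ω) ^ 2 ∂μ) := Filter.liminf_const _
  -- assemble
  have hC0 : 0 ≤ ∫ ω, s ω ^ 2 * (Q ω - B ω) ^ 2 ∂μ :=
    integral_nonneg fun ω => by positivity
  have hstar_aesm : AEStronglyMeasurable[mΩ] (fun ω => s ω ^ 2 * (Q ω - Bstar ω) ^ 2) μ := by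
    have hBsm : AEStronglyMeasurable[mΩ] Bstar μ :=
      ((hBstarm.mono hℬ le_rfl).stronglyMeasurable).aestronglyMeasurable
    have hrw : (fun ω => s ω ^ 2 * (Q ω - Bstar ω) ^ 2)
        = fun ω => s ω ^ 2 * Q ω ^ 2 - 2 * (Bstar ω * (s ω ^ 2 * Q ω))
          + Bstar ω ^ 2 * s ω ^ 2 := by
      funext ω; ring
    rw [hrw]
    exact (h1.aestronglyMeasurable.sub
        ((hBsm.mul h2.aestronglyMeasurable).const_mul 2)).add
      ((hBsm.pow 2).mul h3.aestronglyMeasurable)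
  show ∫ ω, s ω ^ 2 * (Q ω - Bstar ω) ^ 2 ∂μ
      ≤ ∫ ω, s ω ^ 2 * (Q ω - B ω) ^ 2 ∂μ
  rw [integral_eq_lintegral_of_nonneg_ae
    (Filter.Eventually.of_forall fun ω => by positivity) hstar_aesm]
  exact ENNReal.toReal_le_of_le_ofReal hC0 (le_trans fatou hbound)
end

section
/- Let (Ω, ℱ, ℙ) be a probability space, ℬ₁ ≤ ℬ₂ ≤ ℱ sub-σ-algebras, and s, Q : Ω → ℝ with s²·Q², s²·Q and s² integrable and E[s²|ℬᵢ] > 0 almost surely for i = 1, 2. Let B*ᵢ = E[s²·Q|ℬᵢ] / E[s²|ℬᵢ] be the corresponding optimal baselines. Then E[s²·(Q − B*₂)²] ≤ E[s²·(Q − B*₁)²]; i.e., the optimal baseline over the larger conditioning set achieves variance no larger than the optimal baseline over the smaller set. -/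
open MeasureTheory

section OptimalBaselineAux

variable {Ω : Type*} {mΩ : MeasurableSpace Ω} {μ : Measure Ω} [IsProbabilityMeasure μ]

/-- pointwise real fact: nonnegativity of a quadratic on the rationals gives
the discriminant inequality. -/
lemma quad_rat_nonneg_discrim {f g h : ℝ} (hf : 0 < f)
    (H : ∀ q : ℚ, 0 ≤ h + 2 * (q : ℝ) * g + (q : ℝ) ^ 2 * f) : g ^ 2 ≤ f * h := by
  have H' : ∀ t : ℝ, 0 ≤ h + 2 * t * g + t ^ 2 * f := by
    have hc : IsClosed {t : ℝ | 0 ≤ h + 2 * t * g + t ^ 2 * f} :=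
      isClosed_le continuous_const (by continuity)
    intro t
    have ht : t ∈ closure (Set.range ((↑) : ℚ → ℝ)) := by
      rw [Rat.denseRange_cast.closure_range]; trivial
    refine hc.closure_subset (closure_mono ?_ ht)
    rintro x ⟨q, rfl⟩
    exact H q
  have := H' (-(g / f))
  have h2 : h + 2 * (-(g / f)) * g + (-(g / f)) ^ 2 * f = h - g ^ 2 / f := by
    field_simp; ring
  rw [h2] at this
  have h3 : f * (h - g ^ 2 / f) = f * h - g ^ 2 := by field_simp
  nlinarith [mul_nonneg hf.le this]

/-- monotone-convergence pull-out: for nonnegative integrable `X` and nonnegative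
`m`-measurable `h`, the lintegrals of `X*h` and `E[X|m]*h` agree. -/
lemma lintegral_mul_condexp_eq {m : MeasurableSpace Ω} (hm : m ≤ mΩ)
    {X h : Ω → ℝ} (hX : Integrable X μ) (hX0 : 0 ≤ᵐ[μ] X)
    (hh : StronglyMeasurable[m] h) (hh0 : ∀ ω, 0 ≤ h ω) :
    ∫⁻ ω, ENNReal.ofReal (X ω * h ω) ∂μ
      = ∫⁻ ω, ENNReal.ofReal ((μ[X|m]) ω * h ω) ∂μ := by
  set hn : ℕ → Ω → ℝ := fun n ω => min (h ω) n with hhn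
  have hh_meas : Measurable[m] h := hh.measurable
  have hn_sm : ∀ n, StronglyMeasurable[m] (hn n) :=
    fun n => ((hh_meas.min (@measurable_const ℝ Ω _ m _)).stronglyMeasurable)
  have hn_bdd : ∀ n, ∃ C, ∀ ω, ‖hn n ω‖ ≤ C := by
    intro n
    exact ⟨n, fun ω => by
      rw [Real.norm_eq_abs, abs_of_nonneg (le_min (hh0 ω) n.cast_nonneg)]
      exact min_le_right _ _⟩
  have hn_nonneg : ∀ n ω, 0 ≤ hn n ω := fun n ω => le_min (hh0 ω) n.cast_nonneg
  have hintX : ∀ n, Integrable (fun ω => hn n ω * X ω) μ := fun n =>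
    hX.bdd_mul ((hn_sm n).mono hm).aestronglyMeasurable
      (Filter.Eventually.of_forall (hn_bdd n).choose_spec)
  have hintC : ∀ n, Integrable (fun ω => hn n ω * (μ[X|m]) ω) μ := fun n =>
    integrable_condExp.bdd_mul ((hn_sm n).mono hm).aestronglyMeasurable
      (Filter.Eventually.of_forall (hn_bdd n).choose_spec)
  have key : ∀ n, ∫ ω, hn n ω * X ω ∂μ = ∫ ω, hn n ω * (μ[X|m]) ω ∂μ := by
    intro n
    have hpull : μ[hn n * X|m] =ᵐ[μ] hn n * μ[X|m] :=
      condExp_mul_of_stronglyMeasurable_left (hn_sm n) (hintX n) hX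
    calc ∫ ω, hn n ω * X ω ∂μ = ∫ ω, (μ[hn n * X|m]) ω ∂μ := (integral_condExp hm).symm
      _ = ∫ ω, hn n ω * (μ[X|m]) ω ∂μ := integral_congr_ae hpull
  -- convert to lintegrals
  have hXm : AEMeasurable X μ := hX.aemeasurable
  have hCm : AEMeasurable (μ[X|m]) μ := integrable_condExp.aemeasurable
  have hhm : Measurable[mΩ] h := (hh.mono hm).measurable
  have hC0 : 0 ≤ᵐ[μ] μ[X|m] := condExp_nonneg hX0
  have hmct : ∀ (Y : Ω → ℝ), AEMeasurable Y μ → 0 ≤ᵐ[μ] Y →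
      ∫⁻ ω, ENNReal.ofReal (Y ω * h ω) ∂μ
        = ⨆ n, ∫⁻ ω, ENNReal.ofReal (Y ω * hn n ω) ∂μ := by
    intro Y hYm hY0
    have hmeas : ∀ n : ℕ, AEMeasurable (fun ω => ENNReal.ofReal (Y ω * hn n ω)) μ := by
      intro n
      exact (hYm.mul ((hhm.min (@measurable_const ℝ Ω _ mΩ _)).aemeasurable)).ennreal_ofReal
    rw [← lintegral_iSup' hmeas]
    · refine lintegral_congr_ae ?_
      filter_upwards [hY0] with ω hω
      refine le_antisymm ?_ (iSup_le fun n => ENNReal.ofReal_le_ofReal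
        (mul_le_mul_of_nonneg_left (min_le_left _ _) hω))
      refine le_iSup_of_le ⌈h ω⌉₊ (le_of_eq ?_)
      rw [hhn]
      simp only [min_eq_left (Nat.le_ceil (h ω))]
    · filter_upwards [hY0] with ω hω
      intro i j hij
      exact ENNReal.ofReal_le_ofReal (mul_le_mul_of_nonneg_left
        (min_le_min le_rfl (Nat.cast_le.2 hij)) hω)
  rw [hmct X hXm hX0, hmct (μ[X|m]) hCm hC0]
  congr 1
  ext n
  rw [← ofReal_integral_eq_lintegral_ofReal ((hintX n).congr (by simp [mul_comm]))
      (by filter_upwards [hX0] with ω hω; exact mul_nonneg hω (hn_nonneg n ω)),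
    ← ofReal_integral_eq_lintegral_ofReal ((hintC n).congr (by simp [mul_comm]))
      (by filter_upwards [hC0] with ω hω; exact mul_nonneg hω (hn_nonneg n ω))]
  congr 1
  simpa [mul_comm] using key n


/-- conditional Cauchy–Schwarz. -/
lemma condexp_cauchy_schwarz {m : MeasurableSpace Ω} (hm : m ≤ mΩ) (s Q : Ω → ℝ)
    (hint1 : Integrable (fun ω => s ω ^ 2 * Q ω ^ 2) μ)
    (hint2 : Integrable (fun ω => s ω ^ 2 * Q ω) μ)
    (hint3 : Integrable (fun ω => s ω ^ 2) μ) :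
    ∀ᵐ ω ∂μ, 0 < (μ[fun ω => s ω ^ 2|m]) ω →
      (μ[fun ω => s ω ^ 2 * Q ω|m]) ω ^ 2
        ≤ (μ[fun ω => s ω ^ 2|m]) ω * (μ[fun ω => s ω ^ 2 * Q ω ^ 2|m]) ω := by
  have key : ∀ q : ℚ, ∀ᵐ ω ∂μ, 0 ≤ (μ[fun ω => s ω ^ 2 * Q ω ^ 2|m]) ω
      + 2 * (q : ℝ) * (μ[fun ω => s ω ^ 2 * Q ω|m]) ω
      + (q : ℝ) ^ 2 * (μ[fun ω => s ω ^ 2|m]) ω := by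
    intro q
    have hi2 : Integrable (fun ω => (2 * (q : ℝ)) * (s ω ^ 2 * Q ω)) μ :=
      hint2.const_mul _
    have hi3 : Integrable (fun ω => ((q : ℝ) ^ 2) * (s ω ^ 2)) μ := hint3.const_mul _
    have e1 := condExp_add (μ := μ) (m := m) hint1 (hi2.add hi3)
    have e2 := condExp_add (μ := μ) (m := m) hi2 hi3
    have e3 : μ[fun ω => (2 * (q : ℝ)) * (s ω ^ 2 * Q ω)|m]
        =ᵐ[μ] fun ω => (2 * (q : ℝ)) * (μ[fun ω => s ω ^ 2 * Q ω|m]) ω := by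
      have := condExp_smul (μ := μ) (m := m) (2 * (q : ℝ)) (fun ω => s ω ^ 2 * Q ω)
      simpa [Pi.smul_def, smul_eq_mul] using this
    have e4 : μ[fun ω => ((q : ℝ) ^ 2) * (s ω ^ 2)|m]
        =ᵐ[μ] fun ω => ((q : ℝ) ^ 2) * (μ[fun ω => s ω ^ 2|m]) ω := by
      have := condExp_smul (μ := μ) (m := m) ((q : ℝ) ^ 2) (fun ω => s ω ^ 2)
      simpa [Pi.smul_def, smul_eq_mul] using this
    have hnn : 0 ≤ᵐ[μ] ((fun ω => s ω ^ 2 * Q ω ^ 2)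
        + ((fun ω => (2 * (q : ℝ)) * (s ω ^ 2 * Q ω)) + fun ω => ((q : ℝ) ^ 2) * (s ω ^ 2))) := by
      refine Filter.Eventually.of_forall fun ω => ?_
      have : s ω ^ 2 * Q ω ^ 2 + ((2 * (q : ℝ)) * (s ω ^ 2 * Q ω) + ((q : ℝ) ^ 2) * (s ω ^ 2))
          = s ω ^ 2 * (Q ω + (q : ℝ)) ^ 2 := by ring
      simp only [Pi.add_apply, Pi.zero_apply]
      rw [this]
      positivity
    have hnn2 := condExp_nonneg (μ := μ) (m := m) hnn
    filter_upwards [e1, e2, e3, e4, hnn2] with ω h1 h2 h3 h4 h5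
    rw [h1] at h5
    simp only [Pi.add_apply, Pi.zero_apply] at h5 h2
    rw [h2, h3, h4] at h5
    linarith
  have hall : ∀ᵐ ω ∂μ, ∀ q : ℚ, 0 ≤ (μ[fun ω => s ω ^ 2 * Q ω ^ 2|m]) ω
      + 2 * (q : ℝ) * (μ[fun ω => s ω ^ 2 * Q ω|m]) ω
      + (q : ℝ) ^ 2 * (μ[fun ω => s ω ^ 2|m]) ω := ae_all_iff.2 key
  filter_upwards [hall] with ω hω hpos
  exact quad_rat_nonneg_discrim hpos fun q => hω q


/-- integrability of `s² B²` for the optimal baseline `B = E[s²Q|m]/E[s²|m]`. -/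
lemma integrable_sq_mul_baseline_sq {m : MeasurableSpace Ω} (hm : m ≤ mΩ) (s Q : Ω → ℝ)
    (hint1 : Integrable (fun ω => s ω ^ 2 * Q ω ^ 2) μ)
    (hint2 : Integrable (fun ω => s ω ^ 2 * Q ω) μ)
    (hint3 : Integrable (fun ω => s ω ^ 2) μ)
    (hpos : ∀ᵐ ω ∂μ, 0 < (μ[fun ω => s ω ^ 2|m]) ω) :
    Integrable (fun ω => s ω ^ 2
      * ((μ[fun ω => s ω ^ 2 * Q ω|m]) ω / (μ[fun ω => s ω ^ 2|m]) ω) ^ 2) μ := by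
  set f := μ[fun ω => s ω ^ 2|m] with hf
  set g := μ[fun ω => s ω ^ 2 * Q ω|m] with hg
  set B : Ω → ℝ := fun ω => g ω / f ω with hB
  have hBsm : StronglyMeasurable[m] B :=
    (stronglyMeasurable_condExp.measurable.div stronglyMeasurable_condExp.measurable).stronglyMeasurable
  have hB2sm : StronglyMeasurable[m] (fun ω => B ω ^ 2) :=
    (hBsm.measurable.pow_const 2).stronglyMeasurable
  have hs0 : 0 ≤ᵐ[μ] fun ω => s ω ^ 2 := Filter.Eventually.of_forall fun ω => sq_nonneg _
  constructor
  · exact hint3.aestronglyMeasurable.mul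
      ((hB2sm.mono hm).aestronglyMeasurable)
  · have hCS := condexp_cauchy_schwarz hm s Q hint1 hint2 hint3
    have hbound : (fun ω => f ω * B ω ^ 2) ≤ᵐ[μ] fun ω => (μ[fun ω => s ω ^ 2 * Q ω ^ 2|m]) ω := by
      filter_upwards [hCS, hpos] with ω hcs hp
      have h1 : f ω * B ω ^ 2 = g ω ^ 2 / f ω := by
        rw [hB]; field_simp
      rw [h1, div_le_iff₀ hp]
      calc g ω ^ 2 ≤ f ω * (μ[fun ω => s ω ^ 2 * Q ω ^ 2|m]) ω := hcs hp
        _ = (μ[fun ω => s ω ^ 2 * Q ω ^ 2|m]) ω * f ω := mul_comm _ _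
    have key := lintegral_mul_condexp_eq hm hint3 hs0 hB2sm (fun ω => sq_nonneg _)
    rw [HasFiniteIntegral]
    have e1 : ∀ ω, (‖s ω ^ 2 * B ω ^ 2‖₊ : ENNReal) = ENNReal.ofReal (s ω ^ 2 * B ω ^ 2) :=
      fun ω => Real.enorm_eq_ofReal (by positivity)
    calc ∫⁻ ω, ‖s ω ^ 2 * B ω ^ 2‖₊ ∂μ
        = ∫⁻ ω, ENNReal.ofReal (s ω ^ 2 * B ω ^ 2) ∂μ := by simp_rw [e1]
      _ = ∫⁻ ω, ENNReal.ofReal (f ω * B ω ^ 2) ∂μ := key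
      _ ≤ ∫⁻ ω, ENNReal.ofReal ((μ[fun ω => s ω ^ 2 * Q ω ^ 2|m]) ω) ∂μ := by
          refine lintegral_mono_ae ?_
          filter_upwards [hbound] with ω hω
          exact ENNReal.ofReal_le_ofReal hω
      _ ≤ ∫⁻ ω, ‖(μ[fun ω => s ω ^ 2 * Q ω ^ 2|m]) ω‖₊ ∂μ :=
          lintegral_mono fun ω => Real.ofReal_le_enorm _
      _ < ⊤ := integrable_condExp.2


/-- AM–GM integrability of mixed products. -/
lemma integrable_s2_mul_mul {s u v : Ω → ℝ}
    (hu : Integrable (fun ω => s ω ^ 2 * u ω ^ 2) μ)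
    (hv : Integrable (fun ω => s ω ^ 2 * v ω ^ 2) μ)
    (hmeas : AEStronglyMeasurable (fun ω => s ω ^ 2 * (u ω * v ω)) μ) :
    Integrable (fun ω => s ω ^ 2 * (u ω * v ω)) μ := by
  refine Integrable.mono' ((hu.add hv).div_const 2) hmeas ?_
  refine Filter.Eventually.of_forall fun ω => ?_
  rw [Real.norm_eq_abs, abs_mul, abs_of_nonneg (sq_nonneg (s ω))]
  simp only [Pi.add_apply]
  rcases abs_cases (u ω * v ω) with ⟨h1, _⟩ | ⟨h1, _⟩ <;> rw [h1] <;>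
    nlinarith [sq_nonneg (s ω * (u ω - v ω)), sq_nonneg (s ω * (u ω + v ω))]

/-- optimality of the baseline `B = E[s²Q|m]/E[s²|m]` among `m`-measurable baselines. -/
lemma baseline_opt {m : MeasurableSpace Ω} (hm : m ≤ mΩ) (s Q : Ω → ℝ)
    (hint1 : Integrable (fun ω => s ω ^ 2 * Q ω ^ 2) μ)
    (hint2 : Integrable (fun ω => s ω ^ 2 * Q ω) μ)
    (hint3 : Integrable (fun ω => s ω ^ 2) μ)
    (hpos : ∀ᵐ ω ∂μ, 0 < (μ[fun ω => s ω ^ 2|m]) ω)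
    (C : Ω → ℝ) (hC : StronglyMeasurable[m] C)
    (hCint : Integrable (fun ω => s ω ^ 2 * C ω ^ 2) μ) :
    ∫ ω, s ω ^ 2 * (Q ω - (μ[fun ω => s ω ^ 2 * Q ω|m]) ω / (μ[fun ω => s ω ^ 2|m]) ω) ^ 2 ∂μ
      ≤ ∫ ω, s ω ^ 2 * (Q ω - C ω) ^ 2 ∂μ := by
  have hBint2 := integrable_sq_mul_baseline_sq hm s Q hint1 hint2 hint3 hpos
  set f := μ[fun ω => s ω ^ 2|m] with hfdef
  set g := μ[fun ω => s ω ^ 2 * Q ω|m] with hgdef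
  set B : Ω → ℝ := fun ω => g ω / f ω with hBdef
  set D : Ω → ℝ := fun ω => B ω - C ω with hDdef
  have hBsm : StronglyMeasurable[m] B :=
    (stronglyMeasurable_condExp.measurable.div stronglyMeasurable_condExp.measurable).stronglyMeasurable
  have hDsm : StronglyMeasurable[m] D := hBsm.sub hC
  have hBsm' : AEStronglyMeasurable[mΩ] B μ := (hBsm.mono hm).aestronglyMeasurable
  have hCsm' : AEStronglyMeasurable[mΩ] C μ := (hC.mono hm).aestronglyMeasurable
  have hDsm' : AEStronglyMeasurable[mΩ] D μ := (hDsm.mono hm).aestronglyMeasurable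
  have hs2 : AEStronglyMeasurable[mΩ] (fun ω => s ω ^ 2) μ := hint3.aestronglyMeasurable
  have hsQ : AEStronglyMeasurable[mΩ] (fun ω => s ω ^ 2 * Q ω) μ := hint2.aestronglyMeasurable
  have hkey : (fun ω => f ω * B ω) =ᵐ[μ] g := by
    filter_upwards [hpos] with ω hω
    rw [hBdef]
    field_simp
  -- mixed products
  have hQB : Integrable (fun ω => s ω ^ 2 * (Q ω * B ω)) μ :=
    integrable_s2_mul_mul hint1 hBint2
      ((hsQ.mul hBsm').congr (Filter.EventuallyEq.of_eq (funext fun ω => by simp only [Pi.mul_apply, Pi.sub_apply, Pi.add_apply]; ring)))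
  have hQC : Integrable (fun ω => s ω ^ 2 * (Q ω * C ω)) μ :=
    integrable_s2_mul_mul hint1 hCint
      ((hsQ.mul hCsm').congr (Filter.EventuallyEq.of_eq (funext fun ω => by simp only [Pi.mul_apply, Pi.sub_apply, Pi.add_apply]; ring)))
  have hBC : Integrable (fun ω => s ω ^ 2 * (B ω * C ω)) μ :=
    integrable_s2_mul_mul hBint2 hCint
      (((hs2.mul hBsm').mul hCsm').congr (Filter.EventuallyEq.of_eq (funext fun ω => by simp only [Pi.mul_apply, Pi.sub_apply, Pi.add_apply]; ring)))
  -- squares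
  have I1 : Integrable (fun ω => s ω ^ 2 * (Q ω - B ω) ^ 2) μ := by
    refine ((hint1.add hBint2).sub (hQB.const_mul 2)).congr
      (Filter.EventuallyEq.of_eq (funext fun ω => ?_))
    simp only [Pi.add_apply, Pi.sub_apply]
    ring
  have ID2 : Integrable (fun ω => s ω ^ 2 * D ω ^ 2) μ := by
    refine ((hBint2.add hCint).sub (hBC.const_mul 2)).congr
      (Filter.EventuallyEq.of_eq (funext fun ω => ?_))
    simp only [Pi.add_apply, Pi.sub_apply, hDdef]
    ring
  have Icross : Integrable (fun ω => s ω ^ 2 * ((Q ω - B ω) * D ω)) μ :=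
    integrable_s2_mul_mul I1 ID2
      ((((hsQ.mul hDsm').sub ((hs2.mul hBsm').mul hDsm')).congr
        (Filter.EventuallyEq.of_eq (funext fun ω => by simp only [Pi.sub_apply, Pi.mul_apply]; ring))))
  -- cross term is zero
  have hQD : Integrable (D * fun ω => s ω ^ 2 * Q ω) μ :=
    (integrable_s2_mul_mul hint1 ID2
      ((hsQ.mul hDsm').congr (Filter.EventuallyEq.of_eq (funext fun ω => by simp only [Pi.mul_apply, Pi.sub_apply, Pi.add_apply]; ring)))).congr
      (Filter.EventuallyEq.of_eq (funext fun ω => by simp only [Pi.mul_apply]; ring))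
  have hDBs2 : Integrable ((fun ω => D ω * B ω) * fun ω => s ω ^ 2) μ :=
    (integrable_s2_mul_mul hBint2 ID2
      (((hs2.mul hBsm').mul hDsm').congr
        (Filter.EventuallyEq.of_eq (funext fun ω => by simp only [Pi.mul_apply, Pi.sub_apply, Pi.add_apply]; ring)))).congr
      (Filter.EventuallyEq.of_eq (funext fun ω => by simp only [Pi.mul_apply]; ring))
  have hQD' : Integrable (fun ω => D ω * (s ω ^ 2 * Q ω)) μ :=
    hQD.congr (Filter.EventuallyEq.of_eq (funext fun ω => by simp only [Pi.mul_apply]))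
  have hDB' : Integrable (fun ω => (D ω * B ω) * s ω ^ 2) μ :=
    hDBs2.congr (Filter.EventuallyEq.of_eq (funext fun ω => by simp only [Pi.mul_apply]))
  have pull1 : ∫ ω, D ω * (s ω ^ 2 * Q ω) ∂μ = ∫ ω, D ω * g ω ∂μ := by
    have hp := condExp_mul_of_stronglyMeasurable_left (μ := μ) hDsm hQD hint2
    have e0 : ∫ ω, (μ[D * fun ω => s ω ^ 2 * Q ω|m]) ω ∂μ
        = ∫ ω, (D * fun ω => s ω ^ 2 * Q ω) ω ∂μ := integral_condExp hm
    have e1 : ∫ ω, (D * fun ω => s ω ^ 2 * Q ω) ω ∂μ = ∫ ω, D ω * (s ω ^ 2 * Q ω) ∂μ :=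
      integral_congr_ae (Filter.EventuallyEq.of_eq (funext fun ω => by
        simp only [Pi.mul_apply]))
    have e2 : ∫ ω, (μ[D * fun ω => s ω ^ 2 * Q ω|m]) ω ∂μ = ∫ ω, D ω * g ω ∂μ :=
      integral_congr_ae (hp.trans (Filter.EventuallyEq.of_eq (funext fun ω => by
        simp only [Pi.mul_apply]; rfl)))
    rw [← e1, ← e0]
    exact e2
  have pull2 : ∫ ω, (D ω * B ω) * s ω ^ 2 ∂μ = ∫ ω, D ω * g ω ∂μ := by
    have hp := condExp_mul_of_stronglyMeasurable_left (μ := μ) (hDsm.mul hBsm) hDBs2 hint3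
    have e0 : ∫ ω, (μ[(fun ω => D ω * B ω) * fun ω => s ω ^ 2|m]) ω ∂μ
        = ∫ ω, ((fun ω => D ω * B ω) * fun ω => s ω ^ 2) ω ∂μ := integral_condExp hm
    have e1 : ∫ ω, ((fun ω => D ω * B ω) * fun ω => s ω ^ 2) ω ∂μ
        = ∫ ω, (D ω * B ω) * s ω ^ 2 ∂μ :=
      integral_congr_ae (Filter.EventuallyEq.of_eq (funext fun ω => by
        simp only [Pi.mul_apply]))
    have e2 : ∫ ω, (μ[(fun ω => D ω * B ω) * fun ω => s ω ^ 2|m]) ω ∂μ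
        = ∫ ω, D ω * g ω ∂μ := by
      refine integral_congr_ae (hp.trans ?_)
      filter_upwards [hkey] with ω h2
      simp only [Pi.mul_apply]
      rw [← h2]
      ring
    rw [← e1, ← e0]
    exact e2
  have cross_zero : ∫ ω, s ω ^ 2 * ((Q ω - B ω) * D ω) ∂μ = 0 := by
    have e : ∫ ω, s ω ^ 2 * ((Q ω - B ω) * D ω) ∂μ
        = ∫ ω, (D ω * (s ω ^ 2 * Q ω) - (D ω * B ω) * s ω ^ 2) ∂μ :=
      integral_congr_ae (Filter.EventuallyEq.of_eq (funext fun ω => by ring))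
    rw [e, integral_sub hQD' hDB', pull1, pull2, sub_self]
  have decomp : ∫ ω, s ω ^ 2 * (Q ω - C ω) ^ 2 ∂μ
      = ∫ ω, s ω ^ 2 * (Q ω - B ω) ^ 2 ∂μ
        + (2 * ∫ ω, s ω ^ 2 * ((Q ω - B ω) * D ω) ∂μ + ∫ ω, s ω ^ 2 * D ω ^ 2 ∂μ) := by
    have d1 : ∫ ω, s ω ^ 2 * (Q ω - C ω) ^ 2 ∂μ
        = ∫ ω, (s ω ^ 2 * (Q ω - B ω) ^ 2
            + (2 * (s ω ^ 2 * ((Q ω - B ω) * D ω)) + s ω ^ 2 * D ω ^ 2)) ∂μ :=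
      integral_congr_ae (Filter.EventuallyEq.of_eq (funext fun ω => by
        simp only [hDdef]; ring))
    have Isum : Integrable (fun ω => 2 * (s ω ^ 2 * ((Q ω - B ω) * D ω))
        + s ω ^ 2 * D ω ^ 2) μ :=
      ((Icross.const_mul 2).add ID2).congr
        (Filter.EventuallyEq.of_eq (funext fun ω => rfl))
    rw [d1]
    rw [integral_add I1 Isum]
    rw [integral_add (Icross.const_mul 2) ID2]
    rw [integral_const_mul]
  have hD2nonneg : 0 ≤ ∫ ω, s ω ^ 2 * D ω ^ 2 ∂μ :=
    integral_nonneg fun ω => by positivity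
  show ∫ ω, s ω ^ 2 * (Q ω - B ω) ^ 2 ∂μ ≤ ∫ ω, s ω ^ 2 * (Q ω - C ω) ^ 2 ∂μ
  rw [decomp, cross_zero]
  linarith


end OptimalBaselineAux

/-- The optimal baseline over a larger conditioning set achieves variance no larger
than the optimal baseline over a smaller set: with `B*ᵢ = E[s²·Q|ℬᵢ] / E[s²|ℬᵢ]` for
`ℬ₁ ≤ ℬ₂`, we have `E[s²·(Q − B*₂)²] ≤ E[s²·(Q − B*₁)²]`. -/
theorem optimal_baseline_larger_set {Ω : Type*} {mΩ : MeasurableSpace Ω}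
    (μ : Measure Ω) [IsProbabilityMeasure μ]
    (ℬ₁ ℬ₂ : MeasurableSpace Ω) (h12 : ℬ₁ ≤ ℬ₂) (h2 : ℬ₂ ≤ mΩ)
    (s Q : Ω → ℝ)
    (hint1 : Integrable (fun ω => s ω ^ 2 * Q ω ^ 2) μ)
    (hint2 : Integrable (fun ω => s ω ^ 2 * Q ω) μ)
    (hint3 : Integrable (fun ω => s ω ^ 2) μ)
    (hpos1 : ∀ᵐ ω ∂μ, 0 < (μ[fun ω => s ω ^ 2|ℬ₁]) ω)
    (hpos2 : ∀ᵐ ω ∂μ, 0 < (μ[fun ω => s ω ^ 2|ℬ₂]) ω) :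
    ∫ ω, s ω ^ 2 *
        (Q ω - (μ[fun ω => s ω ^ 2 * Q ω|ℬ₂]) ω / (μ[fun ω => s ω ^ 2|ℬ₂]) ω) ^ 2 ∂μ
      ≤ ∫ ω, s ω ^ 2 *
        (Q ω - (μ[fun ω => s ω ^ 2 * Q ω|ℬ₁]) ω / (μ[fun ω => s ω ^ 2|ℬ₁]) ω) ^ 2 ∂μ := by
  have hC : StronglyMeasurable[ℬ₂]
      (fun ω => (μ[fun ω => s ω ^ 2 * Q ω|ℬ₁]) ω / (μ[fun ω => s ω ^ 2|ℬ₁]) ω) :=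
    ((stronglyMeasurable_condExp.measurable.div
      stronglyMeasurable_condExp.measurable).stronglyMeasurable).mono h12
  exact baseline_opt h2 s Q hint1 hint2 hint3 hpos2 _ hC
    (integrable_sq_mul_baseline_sq (h12.trans h2) s Q hint1 hint2 hint3 hpos1)
end

section
/- Let (Ω, ℱ, ℙ) be a probability space, ι a finite index type, m ≤ ℱ a sub-σ-algebra, and for each i ∈ ι let mᵢ ≤ ℱ be a sub-σ-algebra with m ≤ mᵢ and Xᵢ, Yᵢ : Ω → ℝ square-integrable random variables such that Xᵢ and Yᵢ are conditionally independent given mᵢ. Then, almost surely, E[∑_{i} Xᵢ · Yᵢ | m] = ∑_{i} E[ E[Xᵢ|mᵢ] · Yᵢ | m ]; i.e., the value-gradient with respect to the coarser set m can be bootstrapped from the gradient-critics E[Xᵢ|mᵢ] on the finer sets. -/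
open MeasureTheory ProbabilityTheory Set Filter

section Aux

variable {Ω : Type*} {m : MeasurableSpace Ω} [mΩ : MeasurableSpace Ω] {μ : Measure Ω}

/-- Product of two L² functions is integrable (Hölder). -/
lemma integrable_mul_of_memLp_two {f g : Ω → ℝ} (hf : MemLp f 2 μ) (hg : MemLp g 2 μ) :
    Integrable (fun ω => f ω * g ω) μ := by
  have h := hg.smul (φ := f) hf (p := 2) (q := 2) (r := 1)
    (hpqr := ⟨by simp [ENNReal.inv_two_add_inv_two]⟩)
  rw [memLp_one_iff_integrable] at h
  exact h

/-- The conditional expectation of an L² function is L². -/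
lemma memLp_two_condexp [IsFiniteMeasure μ] (hm : m ≤ mΩ) {f : Ω → ℝ} (hf : MemLp f 2 μ) :
    MemLp (μ[f|m]) 2 μ := by
  have hfi : Integrable f μ := hf.integrable one_le_two
  have h : ((condExpL2 ℝ ℝ hm (hf.toLp f) : Lp ℝ 2 μ) : Ω → ℝ) =ᵐ[μ] μ[f|m] := by
    refine ae_eq_condExp_of_forall_setIntegral_eq hm hfi ?_ ?_ ?_
    · intro s _ hμs
      exact integrableOn_Lp_of_measure_ne_top _ fact_one_le_two_ennreal.elim hμs.ne
    · intro s hs hμs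
      rw [integral_condExpL2_eq hm (hf.toLp f) hs hμs.ne]
      exact setIntegral_congr_ae (hm s hs) ((hf.coeFn_toLp).mono fun x hx _ => hx)
    · exact aestronglyMeasurable_condExpL2 hm _
  exact (Lp.memLp _).ae_eq h

/-- Transport of an a.e. equality to the conditional expectation kernel, trim version. -/
lemma ae_trim_condExpKernel_ae_eq [StandardBorelSpace Ω] [IsFiniteMeasure μ]
    (hm : m ≤ mΩ) {f g : Ω → ℝ} (h : f =ᵐ[μ] g) :
    ∀ᵐ ω ∂(μ.trim hm), f =ᵐ[condExpKernel μ m ω] g := by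
  set N := toMeasurable μ {x | f x ≠ g x} with hNdef
  have hNm : MeasurableSet N := measurableSet_toMeasurable μ _
  have hμN : μ N = 0 := by
    rw [measure_toMeasurable]
    exact h
  have h1 : (fun ω => (condExpKernel μ m ω N).toReal) =ᵐ[μ.trim hm] μ⟦N|m⟧ :=
    condExpKernel_ae_eq_trim_condExp hm hNm
  have h2 : μ⟦N|m⟧ =ᵐ[μ] (0 : Ω → ℝ) := by
    have hmem : ∀ᵐ x ∂μ, x ∉ N := by
      rw [← measure_eq_zero_iff_ae_notMem]
      exact hμN
    have hind : N.indicator (fun _ => (1 : ℝ)) =ᵐ[μ] (0 : Ω → ℝ) := by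
      filter_upwards [hmem] with x hx
      simp [Set.indicator_of_notMem hx]
    exact (condExp_congr_ae hind).trans (by rw [condExp_zero])
  have h2' : μ⟦N|m⟧ =ᵐ[μ.trim hm] (0 : Ω → ℝ) :=
    (StronglyMeasurable.ae_eq_trim_iff hm stronglyMeasurable_condExp stronglyMeasurable_zero).mpr h2
  filter_upwards [h1.trans h2'] with ω hω
  have hκN : condExpKernel μ m ω N = 0 := by
    have h_ne : condExpKernel μ m ω N ≠ ⊤ := measure_ne_top _ _
    have : (condExpKernel μ m ω N).toReal = 0 := hω
    rwa [ENNReal.toReal_eq_zero_iff, or_iff_left h_ne] at this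
  exact ae_iff.mpr (measure_mono_null (subset_toMeasurable μ _) hκN)

/-- From conditional independence, a.e. independence under the conditional expectation kernel. -/
lemma ae_indepFun_of_condIndepFun [StandardBorelSpace Ω] [IsProbabilityMeasure μ]
    (hm : m ≤ mΩ) {f g : Ω → ℝ} (hfm : Measurable f) (hgm : Measurable g)
    (h : CondIndepFun m hm f g μ) :
    ∀ᵐ ω ∂(μ.trim hm), IndepFun f g (condExpKernel μ m ω) := by
  have hQ : ∀ᵐ ω ∂(μ.trim hm), ∀ q r : ℚ,
      condExpKernel μ m ω ((f ⁻¹' Iic (q : ℝ)) ∩ (g ⁻¹' Iic (r : ℝ)))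
        = condExpKernel μ m ω (f ⁻¹' Iic (q : ℝ)) * condExpKernel μ m ω (g ⁻¹' Iic (r : ℝ)) := by
    rw [ae_all_iff]
    intro q
    rw [ae_all_iff]
    intro r
    exact h _ _ ⟨Iic (q : ℝ), measurableSet_Iic, rfl⟩ ⟨Iic (r : ℝ), measurableSet_Iic, rfl⟩
  filter_upwards [hQ] with ω hω
  have : IsProbabilityMeasure (condExpKernel μ m ω) := inferInstance
  have hreal : (inferInstance : MeasurableSpace ℝ) = borel ℝ := BorelSpace.measurable_eq
  have hfeq : MeasurableSpace.comap f (inferInstance : MeasurableSpace ℝ)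
      = MeasurableSpace.generateFrom {s | ∃ t ∈ (⋃ q : ℚ, {Iic (q : ℝ)}), f ⁻¹' t = s} := by
    rw [hreal, Real.borel_eq_generateFrom_Iic_rat, MeasurableSpace.comap_generateFrom]
    rfl
  have hgeq : MeasurableSpace.comap g (inferInstance : MeasurableSpace ℝ)
      = MeasurableSpace.generateFrom {s | ∃ t ∈ (⋃ q : ℚ, {Iic (q : ℝ)}), g ⁻¹' t = s} := by
    rw [hreal, Real.borel_eq_generateFrom_Iic_rat, MeasurableSpace.comap_generateFrom]
    rfl
  show ProbabilityTheory.Indep (MeasurableSpace.comap f inferInstance)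
    (MeasurableSpace.comap g inferInstance) (condExpKernel μ m ω)
  refine IndepSets.indep (MeasurableSpace.comap_le_iff_le_map.mpr hfm.le_map)
    (MeasurableSpace.comap_le_iff_le_map.mpr hgm.le_map)
    (Real.isPiSystem_Iic_rat.comap f) (Real.isPiSystem_Iic_rat.comap g) hfeq hgeq ?_
  rintro _ _ ⟨t1, ht1, rfl⟩ ⟨t2, ht2, rfl⟩
  simp only [mem_iUnion, mem_singleton_iff] at ht1 ht2
  obtain ⟨q, rfl⟩ := ht1
  obtain ⟨r, rfl⟩ := ht2
  exact Filter.Eventually.of_forall fun _ => hω q r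

/-- Conditional expectation of the product of conditionally independent L² functions,
measurable version. -/
lemma condexp_mul_of_condIndepFun_meas [StandardBorelSpace Ω] [IsProbabilityMeasure μ]
    (hm : m ≤ mΩ) {f g : Ω → ℝ} (hfm : Measurable f) (hgm : Measurable g)
    (hf : MemLp f 2 μ) (hg : MemLp g 2 μ) (h : CondIndepFun m hm f g μ) :
    μ[fun ω => f ω * g ω|m] =ᵐ[μ] fun ω => (μ[f|m]) ω * (μ[g|m]) ω := by
  have hfi : Integrable f μ := hf.integrable one_le_two
  have hgi : Integrable g μ := hg.integrable one_le_two
  have hfg : Integrable (fun ω => f ω * g ω) μ := integrable_mul_of_memLp_two hf hg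
  have h1 := condExp_ae_eq_integral_condExpKernel hm hfg
  have h2 := condExp_ae_eq_integral_condExpKernel hm hfi
  have h3 := condExp_ae_eq_integral_condExpKernel hm hgi
  have h4 := ae_of_ae_trim hm (ae_indepFun_of_condIndepFun hm hfm hgm h)
  have h5 := hfi.condExpKernel_ae (m := m)
  have h6 := hgi.condExpKernel_ae (m := m)
  filter_upwards [h1, h2, h3, h4, h5, h6] with ω hω1 hω2 hω3 hω4 hω5 hω6
  rw [hω1, hω2, hω3]
  exact IndepFun.integral_fun_mul_eq_mul_integral hω4 hω5.1 hω6.1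

/-- Conditional expectation of the product of conditionally independent L² functions. -/
lemma condexp_mul_of_condIndepFun [StandardBorelSpace Ω] [IsProbabilityMeasure μ]
    (hm : m ≤ mΩ) {f g : Ω → ℝ} (hf : MemLp f 2 μ) (hg : MemLp g 2 μ)
    (h : CondIndepFun m hm f g μ) :
    μ[fun ω => f ω * g ω|m] =ᵐ[μ] fun ω => (μ[f|m]) ω * (μ[g|m]) ω := by
  set f' := hf.1.mk f with hf'def
  set g' := hg.1.mk g with hg'def
  have hff' : f =ᵐ[μ] f' := hf.1.ae_eq_mk
  have hgg' : g =ᵐ[μ] g' := hg.1.ae_eq_mk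
  have hf'm : Measurable f' := hf.1.measurable_mk
  have hg'm : Measurable g' := hg.1.measurable_mk
  have hf' : MemLp f' 2 μ := hf.ae_eq hff'
  have hg' : MemLp g' 2 μ := hg.ae_eq hgg'
  have h' : CondIndepFun m hm f' g' μ :=
    Kernel.IndepFun.congr' h (ae_trim_condExpKernel_ae_eq hm hff')
      (ae_trim_condExpKernel_ae_eq hm hgg')
  have key := condexp_mul_of_condIndepFun_meas hm hf'm hg'm hf' hg' h'
  have e1 : μ[fun ω => f ω * g ω|m] =ᵐ[μ] μ[fun ω => f' ω * g' ω|m] :=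
    condExp_congr_ae (hff'.mul hgg')
  have e2 : μ[f|m] =ᵐ[μ] μ[f'|m] := condExp_congr_ae hff'
  have e3 : μ[g|m] =ᵐ[μ] μ[g'|m] := condExp_congr_ae hgg'
  filter_upwards [key, e1, e2, e3] with ω hωk hω1 hω2 hω3
  rw [hω1, hωk, hω2, hω3]

end Aux

/-- The gradient-critic bootstrap: the value-gradient with respect to a coarser set `m`
can be bootstrapped from the gradient-critics `E[Xᵢ|mᵢ]` on finer sets `mᵢ ≥ m`:
almost surely, `E[∑ i, Xᵢ · Yᵢ | m] = ∑ i, E[E[Xᵢ|mᵢ] · Yᵢ | m]`. -/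
theorem gradient_critic_bootstrap {Ω : Type*} {mΩ : MeasurableSpace Ω} [StandardBorelSpace Ω]
    (μ : Measure Ω) [IsProbabilityMeasure μ]
    {ι : Type*} [Fintype ι]
    (m : MeasurableSpace Ω) (hmΩ : m ≤ mΩ)
    (mi : ι → MeasurableSpace Ω) (hmi : ∀ i, mi i ≤ mΩ) (hmle : ∀ i, m ≤ mi i)
    (X Y : ι → Ω → ℝ)
    (hX : ∀ i, MemLp (X i) 2 μ) (hY : ∀ i, MemLp (Y i) 2 μ)
    (hindep : ∀ i, CondIndepFun (mi i) (hmi i) (X i) (Y i) μ) :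
    μ[fun ω => ∑ i, X i ω * Y i ω|m]
      =ᵐ[μ] fun ω => ∑ i, (μ[fun ω' => (μ[X i|mi i]) ω' * Y i ω'|m]) ω := by
  have hXi : ∀ i, Integrable (X i) μ := fun i => (hX i).integrable one_le_two
  have hYi : ∀ i, Integrable (Y i) μ := fun i => (hY i).integrable one_le_two
  have hXY : ∀ i, Integrable (fun ω => X i ω * Y i ω) μ := fun i =>
    integrable_mul_of_memLp_two (mΩ := mΩ) (hX i) (hY i)
  have hEX : ∀ i, MemLp (μ[X i|mi i]) 2 μ := fun i => memLp_two_condexp (mΩ := mΩ) (hmi i) (hX i)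
  have hEXY : ∀ i, Integrable (fun ω => (μ[X i|mi i]) ω * Y i ω) μ := fun i =>
    integrable_mul_of_memLp_two (mΩ := mΩ) (hEX i) (hY i)
  have key : ∀ i, μ[fun ω => X i ω * Y i ω|m]
      =ᵐ[μ] μ[fun ω' => (μ[X i|mi i]) ω' * Y i ω'|m] := by
    intro i
    have mid1 : μ[fun ω => X i ω * Y i ω|mi i]
        =ᵐ[μ] fun ω => (μ[X i|mi i]) ω * (μ[Y i|mi i]) ω :=
      condexp_mul_of_condIndepFun (mΩ := mΩ) (hmi i) (hX i) (hY i) (hindep i)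
    have mid2 : μ[fun ω' => (μ[X i|mi i]) ω' * Y i ω'|mi i]
        =ᵐ[μ] fun ω => (μ[X i|mi i]) ω * (μ[Y i|mi i]) ω := by
      have hpull := condExp_mul_of_stronglyMeasurable_left (m := mi i)
        (stronglyMeasurable_condExp (f := X i)) (hEXY i) (hYi i)
      exact hpull
    have mid : μ[fun ω => X i ω * Y i ω|mi i]
        =ᵐ[μ] μ[fun ω' => (μ[X i|mi i]) ω' * Y i ω'|mi i] := mid1.trans mid2.symm
    calc μ[fun ω => X i ω * Y i ω|m]
        =ᵐ[μ] μ[μ[fun ω => X i ω * Y i ω|mi i]|m] :=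
          (condExp_condExp_of_le (hmle i) (hmi i)).symm
      _ =ᵐ[μ] μ[μ[fun ω' => (μ[X i|mi i]) ω' * Y i ω'|mi i]|m] := condExp_congr_ae mid
      _ =ᵐ[μ] μ[fun ω' => (μ[X i|mi i]) ω' * Y i ω'|m] :=
          condExp_condExp_of_le (hmle i) (hmi i)
  have hsum : (fun ω => ∑ i, X i ω * Y i ω) = ∑ i, (fun ω => X i ω * Y i ω) := by
    funext ω
    simp
  rw [hsum]
  have h1 := condExp_finsetSum (μ := μ) (m := m) (s := Finset.univ)
    (f := fun i => (fun ω => X i ω * Y i ω)) (fun i _ => hXY i)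
  have h2 : ∀ᵐ ω ∂μ, ∀ i, (μ[fun ω'' => X i ω'' * Y i ω''|m]) ω
      = (μ[fun ω' => (μ[X i|mi i]) ω' * Y i ω'|m]) ω := ae_all_iff.mpr key
  filter_upwards [h1, h2] with ω hω1 hω2
  rw [hω1]
  simp only [Finset.sum_apply]
  exact Finset.sum_congr rfl fun i _ => hω2 i
end

section
/- Let W be a finite type, p : W → ℝ → ℝ a parametric family of probability mass functions on W (in the parameter v), and L : ℝ → W → ℝ with v ↦ L v w differentiable for each w. Define the critic Q(v) = ∑_{w ∈ W} p w v · L v w. Then Q is differentiable and for every v, deriv Q v = ∑_{w ∈ W} p w v · ( (deriv of t ↦ L t w at v) + (deriv of t ↦ log (p w t) at v) · L v w ); i.e., the gradient of the critic equals the conditional expectation of the gradient of the surrogate loss (the gradient-critic). -/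
/-- The gradient of the critic equals the conditional expectation of the gradient of
the surrogate loss (the gradient-critic): with critic `Q v = ∑ w, p w v * L v w`, `Q`
is differentiable with
`deriv Q v = ∑ w, p w v * (deriv (fun t => L t w) v + score w v * L v w)`. -/
theorem gradient_of_critic_is_gradient_critic {W : Type*} [Fintype W]
    (p : W → ℝ → ℝ)
    (hpos : ∀ w v, 0 < p w v)
    (hdiff : ∀ w, Differentiable ℝ (p w))
    (hsum : ∀ v : ℝ, ∑ w, p w v = 1)
    (L : ℝ → W → ℝ)
    (hL : ∀ w, Differentiable ℝ (fun v => L v w)) :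
    ∀ v : ℝ, HasDerivAt (fun v => ∑ w, p w v * L v w)
      (∑ w, p w v * (deriv (fun t => L t w) v
        + deriv (fun t => Real.log (p w t)) v * L v w)) v := by
  intro v
  apply HasDerivAt.fun_sum
  intro w _
  have hne : p w v ≠ 0 := (hpos w v).ne'
  have hp : HasDerivAt (p w) (deriv (p w) v) v := (hdiff w v).hasDerivAt
  have hl : HasDerivAt (fun t => L t w) (deriv (fun t => L t w) v) v :=
    ((hL w) v).hasDerivAt
  have hlog : deriv (fun t => Real.log (p w t)) v = deriv (p w) v / p w v :=
    (hp.log hne).deriv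
  have := hp.fun_mul hl
  refine this.congr_deriv ?_
  rw [hlog]
  field_simp
  ring
end
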